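/- Let N ∈ ℕ, B ∈ ℝ \ {−1, 1}, and B_1, …, B_N ∈ ℝ \ {−1}. Let Y : ℝ → ℝ be twice differentiable with Y(s) > 0 for all s, and let Q, λ, λ_1, …, λ_N : ℝ → ℝ satisfy Y''(s) + Q(s)Y(s) = λ(s)/Y(s)^B + Σ_{i=1}^N λ_i(s)/Y(s)^{B_i} for all s ∈ ℝ. Let ϑ > 0, let τ_σ : ℝ → ℝ satisfy τ_σ'(t) = √ϑ · Y(τ_σ(t))^{(B+1)/4} for all t, let σ : ℝ → ℝ satisfy σ'(t) = 1/τ_σ'(t) for all t, and let g : ℝ → ℝ be a differentiable inverse of σ (g(σ(t)) = t for all t). Define u(s) = Y(τ_σ(g(s)))^{(1−B)/2}, P(s) = (ϑ²/2)(B−1) Q(τ_σ(g(s))) Y(τ_σ(g(s)))^{B+1}, E(s) = (ϑ²/2)(B−1) λ(τ_σ(g(s))), F_i(s) = (ϑ²/2)(1−B) λ_i(τ_σ(g(s))), and C_i = 1 − 2(B_i − 1)/(B − 1). Then for every t ∈ ℝ, at s = σ(t) the function u is twice differentiable and satisfies the Schrödinger-type equation u''(s) + [E(s) − P(s)]u(s)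 = Σ_{i=1}^N F_i(s)/u(s)^{C_i}. -/

import Mathlib

/-- from a generalized EMP equation to a Schrödinger-type equation. -/
theorem stmt_2
    (N : ℕ) (B : ℝ) (hB1 : B ≠ -1) (hB2 : B ≠ 1)
    (Bi : Fin N → ℝ) (hBi : ∀ i, Bi i ≠ -1)
    (Y Q lam : ℝ → ℝ) (lami : Fin N → ℝ → ℝ)
    (hYd : Differentiable ℝ Y) (hYd' : Differentiable ℝ (deriv Y))
    (hYpos : ∀ s, 0 < Y s)
    (hEMP : ∀ s, deriv (deriv Y) s + Q s * Y s
        = lam s / Y s ^ B + ∑ i, lami i s / Y s ^ Bi i)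
    (ϑ : ℝ) (hϑ : 0 < ϑ)
    (τσ σ g : ℝ → ℝ)
    (hτσ : ∀ t, deriv τσ t = Real.sqrt ϑ * Y (τσ t) ^ ((B + 1) / 4))
    (hσ : ∀ t, deriv σ t = 1 / deriv τσ t)
    (hg : Differentiable ℝ g) (hgσ : ∀ t, g (σ t) = t)
    (u P E : ℝ → ℝ) (F : Fin N → ℝ → ℝ) (C : Fin N → ℝ)
    (hu : ∀ s, u s = Y (τσ (g s)) ^ ((1 - B) / 2))
    (hP : ∀ s, P s = (ϑ ^ 2 / 2) * (B - 1) * Q (τσ (g s)) * Y (τσ (g s)) ^ (B + 1))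
    (hE : ∀ s, E s = (ϑ ^ 2 / 2) * (B - 1) * lam (τσ (g s)))
    (hF : ∀ i s, F i s = (ϑ ^ 2 / 2) * (1 - B) * lami i (τσ (g s)))
    (hC : ∀ i, C i = 1 - 2 * (Bi i - 1) / (B - 1)) :
    ∀ t, DifferentiableAt ℝ u (σ t) ∧ DifferentiableAt ℝ (deriv u) (σ t) ∧
      deriv (deriv u) (σ t) + (E (σ t) - P (σ t)) * u (σ t)
        = ∑ i, F i (σ t) / u (σ t) ^ C i := by
  have hτσ'pos : ∀ r, 0 < deriv τσ r := fun r => by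
    rw [hτσ]
    exact mul_pos (Real.sqrt_pos.mpr hϑ) (Real.rpow_pos_of_pos (hYpos _) _)
  have hwdiff : ∀ r, DifferentiableAt ℝ τσ r := by
    intro r
    by_contra h
    exact (hτσ'pos r).ne' (deriv_zero_of_not_differentiableAt h)
  have hσ'pos : ∀ r, 0 < deriv σ r := fun r => by
    rw [hσ]; exact one_div_pos.mpr (hτσ'pos r)
  have hσdiff : ∀ r, DifferentiableAt ℝ σ r := by
    intro r
    by_contra h
    exact (hσ'pos r).ne' (deriv_zero_of_not_differentiableAt h)
  have hwd : ∀ r, HasDerivAt τσ (deriv τσ r) r := fun r => (hwdiff r).hasDerivAt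
  have hσd : ∀ r, HasDerivAt σ (deriv σ r) r := fun r => (hσdiff r).hasDerivAt
  have hudiff : ∀ s, DifferentiableAt ℝ u s := by
    intro s
    have : DifferentiableAt ℝ (fun s => Y (τσ (g s)) ^ ((1 - B) / 2)) s :=
      DifferentiableAt.rpow_const
        ((hYd _).comp s ((hwdiff _).comp s (hg s)))
        (Or.inl (hYpos _).ne')
    exact this.congr_of_eventuallyEq (Filter.Eventually.of_forall fun x => hu x)
  -- key first-derivative identity
  have hK : ∀ r, deriv u (σ r) = ((1 - B) / 2) * ϑ * deriv Y (τσ r) := by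
    intro r
    have hy := hYpos (τσ r)
    have hne : deriv τσ r ≠ 0 := (hτσ'pos r).ne'
    have hYτ : HasDerivAt (fun w => Y (τσ w)) (deriv Y (τσ r) * deriv τσ r) r :=
      (hYd (τσ r)).hasDerivAt.comp r (hwd r)
    have hh : HasDerivAt (fun w => Y (τσ w) ^ ((1 - B) / 2))
        (deriv Y (τσ r) * deriv τσ r * ((1 - B) / 2) * Y (τσ r) ^ ((1 - B) / 2 - 1)) r :=
      hYτ.rpow_const (Or.inl hy.ne')
    have hcomp : HasDerivAt (u ∘ σ) (deriv u (σ r) * deriv σ r) r :=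
      (hudiff (σ r)).hasDerivAt.comp r (hσd r)
    have heq : u ∘ σ = fun w => Y (τσ w) ^ ((1 - B) / 2) := by
      funext w
      simp only [Function.comp_apply]
      rw [hu, hgσ]
    rw [heq] at hcomp
    have huniq := hcomp.unique hh
    rw [hσ r] at huniq
    have h3 : deriv u (σ r)
        = deriv Y (τσ r) * deriv τσ r * ((1 - B) / 2) * Y (τσ r) ^ ((1 - B) / 2 - 1)
          * deriv τσ r := by
      rw [← huniq]
      field_simp
    rw [h3, hτσ r]
    rw [show deriv Y (τσ r) * (Real.sqrt ϑ * Y (τσ r) ^ ((B + 1) / 4)) * ((1 - B) / 2)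
          * Y (τσ r) ^ ((1 - B) / 2 - 1) * (Real.sqrt ϑ * Y (τσ r) ^ ((B + 1) / 4))
        = ((1 - B) / 2) * deriv Y (τσ r)
          * ((Real.sqrt ϑ * Real.sqrt ϑ)
            * (Y (τσ r) ^ ((1 - B) / 2 - 1) * (Y (τσ r) ^ ((B + 1) / 4) * Y (τσ r) ^ ((B + 1) / 4))))
        from by ring]
    rw [Real.mul_self_sqrt hϑ.le, ← Real.rpow_add hy, ← Real.rpow_add hy,
      show (1 - B) / 2 - 1 + ((B + 1) / 4 + (B + 1) / 4) = 0 from by ring, Real.rpow_zero]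
    ring
  intro t
  -- eventual equality of deriv u with a nice function near σ t
  have hσmono : StrictMono σ := strictMono_of_deriv_pos hσ'pos
  have hmem : Set.Ioo (σ (t - 1)) (σ (t + 1)) ∈ nhds (σ t) :=
    Ioo_mem_nhds (hσmono (by linarith)) (hσmono (by linarith))
  have hsub : Set.Ioo (σ (t - 1)) (σ (t + 1)) ⊆ Set.range σ := by
    intro s hs
    have hcont : ContinuousOn σ (Set.Icc (t - 1) (t + 1)) :=
      fun x _ => ((hσdiff x).continuousAt).continuousWithinAt
    have h2 := intermediate_value_Icc (by linarith : t - 1 ≤ t + 1) hcont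
    obtain ⟨w, _, hw⟩ := h2 (Set.mem_Icc.mpr ⟨hs.1.le, hs.2.le⟩)
    exact ⟨w, hw⟩
  have hEv : deriv u =ᶠ[nhds (σ t)] fun s => ((1 - B) / 2) * ϑ * deriv Y (τσ (g s)) := by
    filter_upwards [hmem] with s hs
    obtain ⟨w, rfl⟩ := hsub hs
    rw [hK w, hgσ]
  have hkg : DifferentiableAt ℝ (fun s => ((1 - B) / 2) * ϑ * deriv Y (τσ (g s))) (σ t) :=
    ((hYd' _).comp _ ((hwdiff _).comp _ (hg _))).const_mul _
  have hdiff2 : DifferentiableAt ℝ (deriv u) (σ t) := hEv.differentiableAt_iff.mpr hkg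
  -- deriv g at σ t
  have hgder : deriv g (σ t) = deriv τσ t := by
    have h1 : HasDerivAt (g ∘ σ) (deriv g (σ t) * deriv σ t) t :=
      (hg (σ t)).hasDerivAt.comp t (hσd t)
    have h2 : g ∘ σ = id := funext fun w => hgσ w
    rw [h2] at h1
    have h3 := h1.unique (hasDerivAt_id t)
    rw [hσ t] at h3
    have hne : deriv τσ t ≠ 0 := (hτσ'pos t).ne'
    field_simp at h3
    exact h3
  -- second derivative
  have hd2 : deriv (deriv u) (σ t)
      = ((1 - B) / 2) * ϑ * deriv (deriv Y) (τσ t) * (deriv τσ t * deriv τσ t) := by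
    rw [hEv.deriv_eq]
    have hin : HasDerivAt (fun s => τσ (g s)) (deriv τσ (g (σ t)) * deriv g (σ t)) (σ t) :=
      (hwd (g (σ t))).comp (σ t) (hg (σ t)).hasDerivAt
    have h1 : HasDerivAt (fun s => deriv Y (τσ (g s)))
        (deriv (deriv Y) (τσ (g (σ t))) * (deriv τσ (g (σ t)) * deriv g (σ t))) (σ t) :=
      by have := (hYd' (τσ (g (σ t)))).hasDerivAt.comp (σ t) hin; exact this
    have h2 := (h1.const_mul (((1 - B) / 2) * ϑ)).deriv
    rw [h2, hgσ, hgder]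
    ring
  refine ⟨hudiff (σ t), hdiff2, ?_⟩
  -- final algebra
  have hy := hYpos (τσ t)
  have hmul : ∀ p q : ℝ, Y (τσ t) ^ p * Y (τσ t) ^ q = Y (τσ t) ^ (p + q) :=
    fun p q => (Real.rpow_add hy p q).symm
  have hB1' : B - 1 ≠ 0 := sub_ne_zero.mpr hB2
  have hueq : u (σ t) = Y (τσ t) ^ ((1 - B) / 2) := by rw [hu, hgσ]
  have hdiv : ∀ (x p : ℝ), x / Y (τσ t) ^ p = x * Y (τσ t) ^ (-p) := fun x p => by
    rw [Real.rpow_neg hy.le, div_eq_mul_inv]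
  have hRHSi : ∀ i : Fin N, F i (σ t) / u (σ t) ^ C i
      = ((1 - B) / 2 * ϑ ^ 2) * lami i (τσ t) * Y (τσ t) ^ ((B + 1) / 2 - Bi i) := by
    intro i
    rw [hF, hueq, hgσ, hC, ← Real.rpow_mul hy.le]
    rw [show (1 - B) / 2 * (1 - 2 * (Bi i - 1) / (B - 1)) = Bi i - 1 + (1 - B) / 2 from by
      field_simp; ring]
    rw [div_eq_mul_inv, ← Real.rpow_neg hy.le,
      show -(Bi i - 1 + (1 - B) / 2) = (B + 1) / 2 - Bi i from by ring]
    ring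
  have hW : deriv τσ t * deriv τσ t = ϑ * Y (τσ t) ^ ((B + 1) / 2) := by
    rw [hτσ,
      show Real.sqrt ϑ * Y (τσ t) ^ ((B + 1) / 4) * (Real.sqrt ϑ * Y (τσ t) ^ ((B + 1) / 4))
        = (Real.sqrt ϑ * Real.sqrt ϑ) * (Y (τσ t) ^ ((B + 1) / 4) * Y (τσ t) ^ ((B + 1) / 4))
        from by ring,
      Real.mul_self_sqrt hϑ.le, hmul, show (B + 1) / 4 + (B + 1) / 4 = (B + 1) / 2 from by ring]
  have hD2 : deriv (deriv Y) (τσ t)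
      = lam (τσ t) / Y (τσ t) ^ B + (∑ i, lami i (τσ t) / Y (τσ t) ^ Bi i)
        - Q (τσ t) * Y (τσ t) := by
    linarith [hEMP (τσ t)]
  have e1 : lam (τσ t) / Y (τσ t) ^ B * Y (τσ t) ^ ((B + 1) / 2)
      = lam (τσ t) * Y (τσ t) ^ ((1 - B) / 2) := by
    rw [div_eq_mul_inv, ← Real.rpow_neg hy.le, mul_assoc, hmul,
      show -B + (B + 1) / 2 = (1 - B) / 2 from by ring]
  have e2 : Y (τσ t) * Y (τσ t) ^ ((B + 1) / 2) = Y (τσ t) ^ ((B + 3) / 2) := by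
    nth_rewrite 1 [← Real.rpow_one (Y (τσ t))]
    rw [hmul, show (1 : ℝ) + (B + 1) / 2 = (B + 3) / 2 from by ring]
  have e3 : Y (τσ t) ^ (B + 1) * Y (τσ t) ^ ((1 - B) / 2) = Y (τσ t) ^ ((B + 3) / 2) := by
    rw [hmul, show B + 1 + (1 - B) / 2 = (B + 3) / 2 from by ring]
  have hsum : (∑ i, ((1 - B) / 2 * ϑ ^ 2) * lami i (τσ t) * Y (τσ t) ^ ((B + 1) / 2 - Bi i))
      = (∑ i, lami i (τσ t) / Y (τσ t) ^ Bi i)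
        * (((1 - B) / 2 * ϑ ^ 2) * Y (τσ t) ^ ((B + 1) / 2)) := by
    rw [Finset.sum_mul]
    refine Finset.sum_congr rfl fun i _ => ?_
    rw [hdiv,
      show lami i (τσ t) * Y (τσ t) ^ (-Bi i)
          * (((1 - B) / 2 * ϑ ^ 2) * Y (τσ t) ^ ((B + 1) / 2))
        = ((1 - B) / 2 * ϑ ^ 2) * lami i (τσ t)
          * (Y (τσ t) ^ (-Bi i) * Y (τσ t) ^ ((B + 1) / 2)) from by ring,
      hmul, show -Bi i + (B + 1) / 2 = (B + 1) / 2 - Bi i from by ring]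
  rw [hd2, Finset.sum_congr rfl fun i _ => hRHSi i, hueq, hE, hP, hgσ, hW, hD2, hsum]
  linear_combination ((1 - B) / 2 * ϑ ^ 2) * e1
    - ((1 - B) / 2 * ϑ ^ 2) * Q (τσ t) * e2
    + ((1 - B) / 2 * ϑ ^ 2) * Q (τσ t) * e3
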